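/- Let P_1,…,P_n be mutually independent random variables on a probability space Ω, with P_i taking values in a finite nonempty set D_i. Let A_1,…,A_m be events such that each A_j is measurable with respect to the σ-algebra generated by the variables {P_i : i ∈ vbl(j)} for some set vbl(j) ⊆ {1,…,n}, and define Γ(j) = {j' ≠ j : vbl(j) ∩ vbl(j') ≠ ∅}. If there exists an assignment of reals x : {1,…,m} → (0,1) such that Pr[A_j] ≤ x(j)·∏_{j'∈Γ(j)} (1 − x(j')) for every j, then Pr[⋂_{j=1}^m A_jᶜ] ≥ ∏_{j=1}^m (1 − x(j)) > 0; in particular the set of outcomes at which none of the events A_1,…,A_m happens is nonempty. -/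

import Mathlib

open MeasureTheory ProbabilityTheory

/-- **Lovász Local Lemma (general, variable framework).**
Mutually independent discrete random variables `P i : Ω → D i`, events `A j` each
measurable w.r.t. the σ-algebra generated by the variables indexed by `vbl j`,
dependency neighborhoods `Γ j = {j' ≠ j : vbl j ∩ vbl j' ≠ ∅}`.  If there is
`x : Fin m → (0,1)` with `Pr[A j] ≤ x j * ∏_{j' ∈ Γ j} (1 - x j')` for all `j`,
then `Pr[⋂ j, (A j)ᶜ] ≥ ∏ j (1 - x j) > 0`; in particular some outcome avoids
all the events. -/
theorem lll_general_variable_framework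
    {Ω : Type*} [MeasurableSpace Ω] (μ : Measure Ω) [IsProbabilityMeasure μ]
    {n m : ℕ} (D : Fin n → Type*) [∀ i, Fintype (D i)] [∀ i, Nonempty (D i)]
    [mD : ∀ i, MeasurableSpace (D i)]
    (P : ∀ i, Ω → D i) (hPmeas : ∀ i, Measurable (P i))
    (hindep : iIndepFun (m := mD) P μ)
    (A : Fin m → Set Ω) (vbl : Fin m → Finset (Fin n))
    (hA : ∀ j, MeasurableSet[⨆ i ∈ vbl j, MeasurableSpace.comap (P i) (mD i)] (A j))
    (Γ : Fin m → Finset (Fin m))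
    (hΓ : ∀ j j', j' ∈ Γ j ↔ j' ≠ j ∧ (vbl j ∩ vbl j').Nonempty)
    (x : Fin m → ℝ) (hx : ∀ j, x j ∈ Set.Ioo (0 : ℝ) 1)
    (hprob : ∀ j, (μ (A j)).toReal ≤ x j * ∏ j' ∈ Γ j, (1 - x j')) :
    ENNReal.ofReal (∏ j, (1 - x j)) ≤ μ (⋂ j, (A j)ᶜ) ∧
      0 < ∏ j, (1 - x j) ∧ (⋂ j, (A j)ᶜ).Nonempty := by
  classical
  have hx0 : ∀ j, 0 < x j := fun j => (hx j).1
  have hx1 : ∀ j, x j < 1 := fun j => (hx j).2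
  have h1x0 : ∀ j, 0 < 1 - x j := fun j => by linarith [hx1 j]
  -- the sub-σ-algebras
  have hcomap_le : ∀ i, MeasurableSpace.comap (P i) (mD i) ≤ ‹MeasurableSpace Ω› :=
    fun i => (measurable_iff_comap_le).mp (hPmeas i)
  have hAmeas : ∀ j, MeasurableSet (A j) := by
    intro j
    refine (iSup₂_le (fun i _ => hcomap_le i) : _ ≤ ‹MeasurableSpace Ω›) _ (hA j)
  -- notation
  set C : Finset (Fin m) → Set Ω := fun S => ⋂ k ∈ S, (A k)ᶜ with hC
  have hCmeas : ∀ S, MeasurableSet (C S) := fun S =>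
    Finset.measurableSet_biInter S (fun k _ => (hAmeas k).compl)
  set f : Finset (Fin m) → ℝ := fun S => (μ (C S)).toReal with hf
  set g : Fin m → Finset (Fin m) → ℝ := fun j S => (μ (A j ∩ C S)).toReal with hg
  have hfin : ∀ s : Set Ω, μ s ≠ ⊤ := fun s => measure_ne_top μ s
  have hf_nonneg : ∀ S, 0 ≤ f S := fun S => ENNReal.toReal_nonneg
  have hf_empty : f ∅ = 1 := by simp [hf, hC]
  have hC_mono : ∀ {S T : Finset (Fin m)}, S ⊆ T → C T ⊆ C S := by
    intro S T hST
    exact Set.biInter_subset_biInter_left hST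
  have hf_mono : ∀ {S T : Finset (Fin m)}, S ⊆ T → f T ≤ f S := by
    intro S T hST
    exact ENNReal.toReal_mono (hfin _) (measure_mono (hC_mono hST))
  have hg_mono : ∀ (j : Fin m) {S T : Finset (Fin m)}, S ⊆ T → g j T ≤ g j S := by
    intro j S T hST
    exact ENNReal.toReal_mono (hfin _)
      (measure_mono (Set.inter_subset_inter_right _ (hC_mono hST)))
  -- splitting by A j
  have hf_insert : ∀ (j : Fin m) (S : Finset (Fin m)), f (insert j S) = f S - g j S := by
    intro j S
    have hCins : C (insert j S) = C S \ A j := by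
      simp only [hC, Finset.set_biInter_insert]
      rw [Set.diff_eq, Set.inter_comm]
    have hsplit : μ (C S ∩ A j) + μ (C S \ A j) = μ (C S) :=
      measure_inter_add_diff (C S) (hAmeas j)
    have h2 := congrArg ENNReal.toReal hsplit
    rw [ENNReal.toReal_add (hfin _) (hfin _)] at h2
    show (μ (C (insert j S))).toReal = (μ (C S)).toReal - (μ (A j ∩ C S)).toReal
    rw [hCins, Set.inter_comm (A j) (C S)] at *
    linarith
  -- independence step
  have hindep_step : ∀ (j : Fin m) (S : Finset (Fin m)),
      (∀ k ∈ S, Disjoint (vbl j) (vbl k)) → g j S = (μ (A j)).toReal * f S := by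
    intro j S hds
    have hIndep : Indep (⨆ i ∈ (↑(vbl j) : Set (Fin n)), MeasurableSpace.comap (P i) (mD i))
        (⨆ i ∈ (↑(vbl j) : Set (Fin n))ᶜ, MeasurableSpace.comap (P i) (mD i)) μ :=
      indep_biSup_compl hcomap_le hindep.iIndep _
    have hAj : MeasurableSet[⨆ i ∈ (↑(vbl j) : Set (Fin n)),
        MeasurableSpace.comap (P i) (mD i)] (A j) := by
      have : (⨆ i ∈ vbl j, MeasurableSpace.comap (P i) (mD i)) =
          ⨆ i ∈ (↑(vbl j) : Set (Fin n)), MeasurableSpace.comap (P i) (mD i) := by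
        simp
      exact this ▸ hA j
    have hCS : MeasurableSet[⨆ i ∈ (↑(vbl j) : Set (Fin n))ᶜ,
        MeasurableSpace.comap (P i) (mD i)] (C S) := by
      refine Finset.measurableSet_biInter S (fun k hk => MeasurableSet.compl ?_)
      have hsub : (⨆ i ∈ vbl k, MeasurableSpace.comap (P i) (mD i)) ≤
          ⨆ i ∈ (↑(vbl j) : Set (Fin n))ᶜ, MeasurableSpace.comap (P i) (mD i) := by
        refine iSup₂_le fun i hi => ?_
        refine le_iSup₂ (f := fun i _ => MeasurableSpace.comap (P i) (mD i)) i ?_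
        intro hmem
        simpa using (hds k hk).le_bot (Finset.mem_inter.mpr ⟨hmem, hi⟩)
      exact hsub _ (hA k)
    have h3 := (hIndep.indepSet_of_measurableSet hAj hCS).measure_inter_eq_mul
    show (μ (A j ∩ C S)).toReal = (μ (A j)).toReal * (μ (C S)).toReal
    rw [h3, ENNReal.toReal_mul]
  -- main induction
  have key : ∀ S : Finset (Fin m), ∀ j ∉ S, g j S ≤ x j * f S := by
    intro S
    induction S using Finset.strongInduction with
    | _ S IH =>
      intro j hj
      set S1 : Finset (Fin m) := S ∩ Γ j with hS1
      set S2 : Finset (Fin m) := S \ Γ j with hS2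
      have hS12 : S1 ∪ S2 = S := by rw [hS1, hS2, Finset.union_comm]; exact Finset.sdiff_union_inter S (Γ j)
      -- chain inequality
      have chain : ∀ S1' : Finset (Fin m), S1' ⊆ S1 →
          (∏ k ∈ S1', (1 - x k)) * f S2 ≤ f (S1' ∪ S2) := by
        intro S1'
        induction S1' using Finset.induction_on with
        | empty => intro _; simp
        | insert _ _ hknot =>
          rename_i k S1'' ih
          intro hsub
          have hk1 : k ∈ S1 := hsub (Finset.mem_insert_self k S1'')
          have hsub'' : S1'' ⊆ S1 := (Finset.subset_insert k S1'').trans hsub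
          have hkS2 : k ∉ S2 := by
            intro h
            exact (Finset.mem_sdiff.mp h).2 (Finset.mem_inter.mp hk1).2
          have hknotin : k ∉ S1'' ∪ S2 := by
            simp only [Finset.mem_union]
            rintro (h | h)
            · exact hknot h
            · exact hkS2 h
          have hTsub : S1'' ∪ S2 ⊂ S := by
            refine Finset.ssubset_iff_of_subset ?_ |>.mpr ⟨k, ?_, hknotin⟩
            · refine Finset.union_subset ?_ ?_
              · exact hsub''.trans (Finset.inter_subset_left)
              · exact Finset.sdiff_subset
            · exact Finset.mem_of_mem_inter_left hk1
          have hkey := IH _ hTsub k hknotin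
          have hins : f (insert k (S1'' ∪ S2)) = f (S1'' ∪ S2) - g k (S1'' ∪ S2) :=
            hf_insert k _
          have h1 : (1 - x k) * f (S1'' ∪ S2) ≤ f (insert k (S1'' ∪ S2)) := by
            rw [hins]; nlinarith [hf_nonneg (S1'' ∪ S2)]
          have h2 : (∏ k' ∈ S1'', (1 - x k')) * f S2 ≤ f (S1'' ∪ S2) := ih hsub''
          rw [Finset.prod_insert hknot, Finset.insert_union]
          calc (1 - x k) * (∏ k' ∈ S1'', (1 - x k')) * f S2
              = (1 - x k) * ((∏ k' ∈ S1'', (1 - x k')) * f S2) := by ring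
            _ ≤ (1 - x k) * f (S1'' ∪ S2) := by
                exact mul_le_mul_of_nonneg_left h2 (h1x0 k).le
            _ ≤ f (insert k (S1'' ∪ S2)) := h1
      have hchain : (∏ k ∈ S1, (1 - x k)) * f S2 ≤ f S := by
        have := chain S1 (subset_refl S1)
        rwa [hS12] at this
      -- disjointness for S2
      have hds : ∀ k ∈ S2, Disjoint (vbl j) (vbl k) := by
        intro k hk
        have hkS : k ∈ S := (Finset.mem_sdiff.mp hk).1
        have hkΓ : k ∉ Γ j := (Finset.mem_sdiff.mp hk).2
        have hkj : k ≠ j := fun h => hj (h ▸ hkS)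
        rw [hΓ j k] at hkΓ
        push_neg at hkΓ
        have := hkΓ hkj
        exact Finset.disjoint_iff_inter_eq_empty.mpr this
      -- product bound: ∏_{Γ j} ≤ ∏_{S1}
      have hprod : (∏ k ∈ Γ j, (1 - x k)) ≤ ∏ k ∈ S1, (1 - x k) := by
        have hsub : S1 ⊆ Γ j := Finset.inter_subset_right
        rw [← Finset.prod_sdiff hsub]
        have h1 : (∏ k ∈ Γ j \ S1, (1 - x k)) ≤ 1 :=
          Finset.prod_le_one (fun k _ => (h1x0 k).le) (fun k _ => by linarith [hx0 k])
        have h2 : 0 ≤ ∏ k ∈ S1, (1 - x k) :=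
          Finset.prod_nonneg (fun k _ => (h1x0 k).le)
        nlinarith
      calc g j S ≤ g j S2 := hg_mono j (Finset.sdiff_subset)
        _ = (μ (A j)).toReal * f S2 := hindep_step j S2 hds
        _ ≤ (x j * ∏ k ∈ Γ j, (1 - x k)) * f S2 :=
            mul_le_mul_of_nonneg_right (hprob j) (hf_nonneg S2)
        _ ≤ x j * ((∏ k ∈ S1, (1 - x k)) * f S2) := by
            have := mul_le_mul_of_nonneg_right hprod (hf_nonneg S2)
            nlinarith [hx0 j]
        _ ≤ x j * f S := mul_le_mul_of_nonneg_left hchain (hx0 j).le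
  -- final chain over univ
  have final : ∀ S : Finset (Fin m), (∏ k ∈ S, (1 - x k)) ≤ f S := by
    intro S
    induction S using Finset.induction_on with
    | empty => simp [hf_empty]
    | insert _ _ hknot =>
      rename_i k S ih
      have hkey := key S k hknot
      have hins := hf_insert k S
      have h1 : (1 - x k) * f S ≤ f (insert k S) := by
        rw [hins]; nlinarith [hf_nonneg S]
      rw [Finset.prod_insert hknot]
      calc (1 - x k) * ∏ k' ∈ S, (1 - x k')
          ≤ (1 - x k) * f S := mul_le_mul_of_nonneg_left ih (h1x0 k).le
        _ ≤ f (insert k S) := h1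
  have hCuniv : C Finset.univ = ⋂ j, (A j)ᶜ := by
    simp [hC]
  have hprod_pos : 0 < ∏ j, (1 - x j) := Finset.prod_pos (fun j _ => h1x0 j)
  have hmain : ENNReal.ofReal (∏ j, (1 - x j)) ≤ μ (⋂ j, (A j)ᶜ) := by
    refine ENNReal.ofReal_le_of_le_toReal ?_
    rw [← hCuniv]
    exact final Finset.univ
  refine ⟨hmain, hprod_pos, ?_⟩
  rw [Set.nonempty_iff_ne_empty]
  intro h
  rw [h, measure_empty] at hmain
  simp only [nonpos_iff_eq_zero, ENNReal.ofReal_eq_zero] at hmain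
  linarith
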